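/- Fix a prime p and let R, a, b, c be as defined below. Let I be a two-sided ideal of R and N ≥ 1 an integer with a^N − 1 ∈ I. Then b and c lie in I + ⊕_{n=3}^{N+2} M_n(F_p); consequently, the quotient ring R/(I + ⊕_{n=3}^{N+2} M_n(F_p)) is generated as a unital ring by the image of a, and is therefore a quotient of the group algebra F_p[t, t^{−1}]/(t^N − 1) of the cyclic group of order N. -/

import Mathlib

/-- The Cartesian product ring `∏_{n ≥ 3} M_n(F_p)` (the `n`-th coordinate, `n ≥ 3`,
being indexed here by `n - 3`). -/
abbrev BigM (p : ℕ) : Type :=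
  ∀ n : ℕ, Matrix (Fin (n + 3)) (Fin (n + 3)) (ZMod p)

/-- `a = (a_n)_n`, the permutation matrix of an `n`-cycle in each coordinate. -/
def aElt (p : ℕ) : BigM p :=
  fun n => Matrix.of fun i j => if j = finRotate (n + 3) i then 1 else 0

/-- `a⁻¹ = (a_n⁻¹)_n`, the permutation matrix of the inverse cycle in each coordinate. -/
def aInvElt (p : ℕ) : BigM p :=
  fun n => Matrix.of fun i j => if j = (finRotate (n + 3)).symm i then 1 else 0

/-- `b = (e_{1,2})_n`. -/
def bElt (p : ℕ) : BigM p :=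
  fun _ => Matrix.single 0 1 1

/-- `c = (e_{2,1})_n`. -/
def cElt (p : ℕ) : BigM p :=
  fun _ => Matrix.single 1 0 1

/-- The ring `R`: the unital subring of `∏_{n ≥ 3} M_n(F_p)` generated by `1, a, a⁻¹, b, c`. -/
def Rring (p : ℕ) : Subring (BigM p) :=
  Subring.closure {aElt p, aInvElt p, bElt p, cElt p}

/-- Membership in the finite direct sum `⊕_{n=3}^{N+2} M_n(F_p)` inside
`∏_{n ≥ 3} M_n(F_p)`: all coordinates of matrix size `> N + 2` (i.e. of index `≥ N` in our
indexing) vanish. -/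
def InDSum (p N : ℕ) (y : BigM p) : Prop :=
  ∀ m : ℕ, N ≤ m → y m = 0

open Fin.NatCast in
lemma aElt_pow (p n : ℕ) (k : ℕ) :
    (aElt p ^ k) n = Matrix.of fun i j => if j = i + (k : Fin (n + 3)) then 1 else 0 := by
  induction k with
  | zero => ext i j; simp [Matrix.one_apply, eq_comm]
  | succ k ih =>
    have : (aElt p ^ (k+1)) n = (aElt p ^ k) n * aElt p n := by rw [pow_succ]; rfl
    rw [this, ih]
    ext i j
    simp only [Matrix.mul_apply, Matrix.of_apply, aElt, ite_mul, one_mul, zero_mul,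
      finRotate_succ_apply]
    rw [Finset.sum_ite_eq' Finset.univ (i + (k : Fin (n+3)))]
    simp [add_assoc]

lemma aInv_mul_aElt (p : ℕ) : aInvElt p * aElt p = 1 := by
  funext n
  ext i j
  show (aInvElt p n * aElt p n) i j = _
  simp only [Matrix.mul_apply, aInvElt, aElt, Matrix.of_apply, ite_mul, one_mul, zero_mul]
  rw [Finset.sum_ite_eq' Finset.univ ((finRotate (n+3)).symm i)]
  simp [Matrix.one_apply, finRotate_succ_apply, eq_comm]

lemma sandwich {α : Type*} [Semiring α] {n : Type*} [Fintype n] [DecidableEq n]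
    (X : Matrix n n α) (i j k l : n) :
    Matrix.single i j 1 * X * Matrix.single k l 1
      = Matrix.single i l (X j k) := by
  ext r s
  rcases eq_or_ne r i with rfl | hr
  · rcases eq_or_ne s l with rfl | hs
    · rw [Matrix.mul_single_apply_same,
        Matrix.single_mul_apply_same]
      simp [Matrix.single]
    · rw [Matrix.mul_single_apply_of_ne _ _ _ _ _ hs]
      simp [Matrix.single, Ne.symm hs]
  · rw [Matrix.mul_assoc, Matrix.single_mul_apply_of_ne _ _ _ _ _ hr]
    simp [Matrix.single, Ne.symm hr]

open Fin.NatCast in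
lemma key_coord (p N : ℕ) (hN : 1 ≤ N) (m : ℕ) (hm : N ≤ m) :
    (bElt p * (aElt p ^ N - 1) * cElt p) m = -(Matrix.single 0 0 1) := by
  have h1 : (bElt p * (aElt p ^ N - 1) * cElt p) m
      = bElt p m * ((aElt p ^ N) m - 1) * cElt p m := rfl
  rw [h1, mul_sub, sub_mul, mul_one]
  have h2 : bElt p m * (aElt p ^ N) m * cElt p m = 0 := by
    rw [aElt_pow]
    show Matrix.single 0 1 1 * _ * Matrix.single 1 0 1 = 0
    rw [sandwich]
    have hne : (1 : Fin (m+3)) ≠ 1 + (N : Fin (m+3)) := by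
      intro h
      have h0 : (0 : Fin (m+3)) = (N : Fin (m+3)) := by
        apply add_left_cancel (a := (1 : Fin (m+3)))
        rw [add_zero]; exact h
      have hdvd : (m+3) ∣ N := Fin.natCast_eq_zero.mp h0.symm
      have := Nat.le_of_dvd (by omega) hdvd
      omega
    simp [Matrix.of_apply, hne]
  have h3 : bElt p m * cElt p m = Matrix.single 0 0 1 := by
    show Matrix.single (0:Fin (m+3)) 1 1 * Matrix.single 1 0 1 = _
    rw [Matrix.single_mul_single_same, one_mul]
  rw [h2, h3, zero_sub]


set_option maxHeartbeats 1000000 in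
/-- **Lemma (Kassabov).**  Let `I` be a two-sided ideal of `R` and `N ≥ 1` with
`a^N - 1 ∈ I`.  Then `b, c ∈ J := I + ⊕_{n=3}^{N+2} M_n(F_p)`; consequently every element
of `R` is congruent modulo `J` to an element of the unital subring generated by `a`
(i.e. `R/J` is generated as a unital ring by the image of `a`), and therefore the quotient
ring `R/J` (realized as the quotient of `R` by the ring congruence `s` with `s u v ↔ u - v ∈ J`)
is a quotient of the group algebra `F_p[t,t⁻¹]/(t^N - 1) = F_p[C_N]` of the cyclic group
of order `N`. -/
theorem quotient_by_ideal_containing_aN_is_cyclic_group_algebra_quotient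
    (p : ℕ) (hp : p.Prime) (N : ℕ) (hN : 1 ≤ N)
    (I : AddSubgroup (BigM p))
    (hIR : ∀ x ∈ I, x ∈ Rring p)
    (hIl : ∀ r ∈ Rring p, ∀ x ∈ I, r * x ∈ I)
    (hIr : ∀ r ∈ Rring p, ∀ x ∈ I, x * r ∈ I)
    (haN : aElt p ^ N - 1 ∈ I) :
    (∃ x ∈ I, ∃ y : BigM p, InDSum p N y ∧ bElt p = x + y) ∧
    (∃ x ∈ I, ∃ y : BigM p, InDSum p N y ∧ cElt p = x + y) ∧
    (∀ z ∈ Rring p, ∃ q ∈ Subring.closure {aElt p}, ∃ x ∈ I,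
      ∃ y : BigM p, InDSum p N y ∧ z = q + x + y) ∧
    (∀ s : RingCon (Rring p),
      (∀ u v : Rring p, s u v ↔
        ∃ x ∈ I, ∃ y : BigM p, InDSum p N y ∧ (u : BigM p) - (v : BigM p) = x + y) →
      ∃ ψ : MonoidAlgebra (ZMod p) (Multiplicative (ZMod N)) →+* s.Quotient,
        Function.Surjective ψ) := by
  haveI : Fact p.Prime := ⟨hp⟩
  haveI : NeZero N := ⟨by omega⟩
  -- membership of generators
  have haR : aElt p ∈ Rring p := Subring.subset_closure (by simp)
  have haInvR : aInvElt p ∈ Rring p := Subring.subset_closure (by simp)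
  have hbR : bElt p ∈ Rring p := Subring.subset_closure (by simp)
  have hcR : cElt p ∈ Rring p := Subring.subset_closure (by simp)
  -- the approximate idempotent
  set x0 : BigM p := -(bElt p * (aElt p ^ N - 1) * cElt p) with hx0def
  have hx0 : x0 ∈ I := I.neg_mem (hIr _ hcR _ (hIl _ hbR _ haN))
  set e00 : BigM p := (fun _ => Matrix.single 0 0 1) with he00def
  set y0 : BigM p := e00 - x0 with hy0def
  have hy0 : InDSum p N y0 := by
    intro m hm
    have : x0 m = Matrix.single 0 0 1 := by
      show -((bElt p * (aElt p ^ N - 1) * cElt p) m) = _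
      rw [key_coord p N hN m hm, neg_neg]
    show e00 m - x0 m = 0
    rw [this]
    show Matrix.single 0 0 1 - Matrix.single 0 0 1 = 0
    rw [sub_self]
  have he00 : e00 = x0 + y0 := by rw [hy0def]; abel
  -- b ∈ I + DSum
  have hbdec : ∃ x ∈ I, ∃ y : BigM p, InDSum p N y ∧ bElt p = x + y := by
    refine ⟨x0 * bElt p, hIr _ hbR _ hx0, y0 * bElt p, ?_, ?_⟩
    · intro m hm
      show y0 m * bElt p m = 0
      rw [hy0 m hm, zero_mul]
    · have heb : e00 * bElt p = bElt p := by
        funext n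
        show (Matrix.single 0 0 1 : Matrix (Fin (n+3)) (Fin (n+3)) (ZMod p))
          * Matrix.single 0 1 1 = Matrix.single 0 1 1
        rw [Matrix.single_mul_single_same, one_mul]
      rw [← add_mul, ← he00]
      exact heb.symm
  -- c ∈ I + DSum
  have hcdec : ∃ x ∈ I, ∃ y : BigM p, InDSum p N y ∧ cElt p = x + y := by
    refine ⟨cElt p * x0, hIl _ hcR _ hx0, cElt p * y0, ?_, ?_⟩
    · intro m hm
      show cElt p m * y0 m = 0
      rw [hy0 m hm, mul_zero]
    · have hce : cElt p * e00 = cElt p := by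
        funext n
        show (Matrix.single 1 0 1 : Matrix (Fin (n+3)) (Fin (n+3)) (ZMod p))
          * Matrix.single 0 0 1 = Matrix.single 1 0 1
        rw [Matrix.single_mul_single_same, one_mul]
      rw [← mul_add, ← he00]
      exact hce.symm
  -- key powers lemma
  have hkey : ∀ k : ℕ, aElt p ^ k - aElt p ^ (k % N) ∈ I := by
    intro k
    induction k using Nat.strong_induction_on with
    | _ k ih =>
      rcases lt_or_ge k N with h | h
      · rw [Nat.mod_eq_of_lt h, sub_self]; exact I.zero_mem
      · have h1 : aElt p ^ (k - N) * (aElt p ^ N - 1) ∈ I :=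
          hIl _ (pow_mem haR _) _ haN
        have h2 := ih (k - N) (by omega)
        have heq : aElt p ^ k - aElt p ^ (k % N)
            = (aElt p ^ (k-N) * (aElt p ^ N - 1))
              + (aElt p ^ (k-N) - aElt p ^ ((k-N) % N)) := by
          rw [mul_sub, mul_one, ← pow_add, Nat.sub_add_cancel h,
            Nat.mod_eq_sub_mod h]
          abel
        rw [heq]
        exact I.add_mem h1 h2
  -- a⁻¹ ≡ a^(N-1) mod I
  have haInvdec : aInvElt p - aElt p ^ (N - 1) ∈ I := by
    have heq : aInvElt p - aElt p ^ (N - 1) = -(aInvElt p * (aElt p ^ N - 1)) := by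
      rw [mul_sub, mul_one, neg_sub]
      congr 1
      have hN' : N = 1 + (N - 1) := by omega
      rw [hN', pow_add, pow_one, ← mul_assoc, aInv_mul_aElt, one_mul]
      simp
    rw [heq]
    exact I.neg_mem (hIl _ haInvR _ haN)
  have hsubR : Subring.closure {aElt p} ≤ Rring p := by
    apply Subring.closure_le.mpr
    intro t ht
    rcases ht with rfl
    exact haR
  -- DSum multiplicative absorption
  have hds_mull : ∀ (u y : BigM p), InDSum p N y → InDSum p N (u * y) := by
    intro u y hy m hm
    show u m * y m = 0
    rw [hy m hm, mul_zero]
  have hds_mulr : ∀ (u y : BigM p), InDSum p N y → InDSum p N (y * u) := by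
    intro u y hy m hm
    show y m * u m = 0
    rw [hy m hm, zero_mul]
  have hds_add : ∀ (y z : BigM p), InDSum p N y → InDSum p N z → InDSum p N (y + z) := by
    intro y z hy hz m hm
    show y m + z m = 0
    rw [hy m hm, hz m hm, add_zero]
  have hds_zero : InDSum p N (0 : BigM p) := fun m _ => rfl
  -- Part 3
  have part3 : ∀ z ∈ Rring p, ∃ q ∈ Subring.closure {aElt p}, ∃ x ∈ I,
      ∃ y : BigM p, InDSum p N y ∧ z = q + x + y := by
    intro z hz
    induction hz using Subring.closure_induction with
    | mem t ht =>
      rcases ht with rfl | rfl | rfl | rfl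
      · exact ⟨aElt p, Subring.subset_closure (Set.mem_singleton _), 0, I.zero_mem, 0, hds_zero, by simp⟩
      · refine ⟨aElt p ^ (N-1), pow_mem (Subring.subset_closure (Set.mem_singleton _)) _,
          aInvElt p - aElt p ^ (N-1), haInvdec, 0, hds_zero, by abel⟩
      · obtain ⟨x, hx, y, hy, hb⟩ := hbdec
        exact ⟨0, zero_mem _, x, hx, y, hy, by rw [hb, zero_add]⟩
      · obtain ⟨x, hx, y, hy, hc⟩ := hcdec
        exact ⟨0, zero_mem _, x, hx, y, hy, by rw [hc, zero_add]⟩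
    | zero => exact ⟨0, zero_mem _, 0, I.zero_mem, 0, hds_zero, by simp⟩
    | one => exact ⟨1, one_mem _, 0, I.zero_mem, 0, hds_zero, by simp⟩
    | add u v hu hv ihu ihv =>
      obtain ⟨q1, hq1, x1, hx1, y1, hy1, rfl⟩ := ihu
      obtain ⟨q2, hq2, x2, hx2, y2, hy2, rfl⟩ := ihv
      exact ⟨q1 + q2, add_mem hq1 hq2, x1 + x2, I.add_mem hx1 hx2, y1 + y2,
        hds_add _ _ hy1 hy2, by abel⟩
    | neg u hu ihu =>
      obtain ⟨q, hq, x, hx, y, hy, rfl⟩ := ihu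
      refine ⟨-q, neg_mem hq, -x, I.neg_mem hx, -y, ?_, by abel⟩
      intro m hm
      show -(y m) = 0
      rw [hy m hm, neg_zero]
    | mul u v hu hv ihu ihv =>
      obtain ⟨q1, hq1, x1, hx1, y1, hy1, rfl⟩ := ihu
      obtain ⟨q2, hq2, x2, hx2, y2, hy2, rfl⟩ := ihv
      refine ⟨q1 * q2, mul_mem hq1 hq2,
        q1 * x2 + x1 * q2 + x1 * x2,
        I.add_mem (I.add_mem (hIl _ (hsubR hq1) _ hx2) (hIr _ (hsubR hq2) _ hx1))
          (hIl _ (hIR _ hx1) _ hx2),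
        q1 * y2 + x1 * y2 + y1 * q2 + y1 * x2 + y1 * y2, ?_, by simp only [mul_add, add_mul]; abel⟩
      refine hds_add _ _ (hds_add _ _ (hds_add _ _ (hds_add _ _ ?_ ?_) ?_) ?_) ?_
      · exact hds_mull _ _ hy2
      · exact hds_mull _ _ hy2
      · exact hds_mulr _ _ hy1
      · exact hds_mulr _ _ hy1
      · exact hds_mull _ _ hy2
  refine ⟨hbdec, hcdec, part3, ?_⟩
  -- Part 4
  intro s hs
  set aR : Rring p := ⟨aElt p, haR⟩ with haRdef
  have hcong : ∀ u v : Rring p, ((u : BigM p) - (v : BigM p)) ∈ I →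
      (RingCon.mk' s) u = (RingCon.mk' s) v := by
    intro u v h
    exact (RingCon.eq s).mpr ((hs u v).mpr ⟨_, h, 0, hds_zero, (add_zero _).symm⟩)
  have hcoe_pow : ∀ (k : ℕ), ((aR ^ k : Rring p) : BigM p) = aElt p ^ k := by
    intro k
    exact SubmonoidClass.coe_pow aR k
  have hrel : ∀ k : ℕ, (RingCon.mk' s) (aR ^ (k % N)) = (RingCon.mk' s) (aR ^ k) := by
    intro k
    apply hcong
    rw [hcoe_pow, hcoe_pow]
    have : aElt p ^ (k % N) - aElt p ^ k = -(aElt p ^ k - aElt p ^ (k % N)) := by abel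
    rw [this]
    exact I.neg_mem (hkey k)
  -- scalar ring hom
  have hscalar : ∀ k : ZMod p, algebraMap (ZMod p) (BigM p) k ∈ Rring p := by
    intro k
    have : algebraMap (ZMod p) (BigM p) k = ((k.val : ℕ) : BigM p) := by
      rw [← map_natCast (algebraMap (ZMod p) (BigM p)) k.val]
      congr 1
      simp [ZMod.natCast_val, ZMod.cast_id]
    rw [this]
    exact natCast_mem _ _
  set fz : ZMod p →+* Rring p :=
    (algebraMap (ZMod p) (BigM p)).codRestrict (Rring p) hscalar with hfzdef
  set f : ZMod p →+* s.Quotient := (RingCon.mk' s).comp fz with hfdef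
  -- group monoid hom
  set g : Multiplicative (ZMod N) →* s.Quotient :=
    { toFun := fun x => (RingCon.mk' s) (aR ^ (Multiplicative.toAdd x).val)
      map_one' := by
        show (RingCon.mk' s) (aR ^ (Multiplicative.toAdd (1 : Multiplicative (ZMod N))).val) = 1
        rw [toAdd_one, ZMod.val_zero, pow_zero, map_one]
      map_mul' := by
        intro x y
        show (RingCon.mk' s) (aR ^ (Multiplicative.toAdd (x * y)).val)
          = (RingCon.mk' s) (aR ^ (Multiplicative.toAdd x).val)
            * (RingCon.mk' s) (aR ^ (Multiplicative.toAdd y).val)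
        have h1 : (Multiplicative.toAdd (x * y)).val
            = ((Multiplicative.toAdd x).val + (Multiplicative.toAdd y).val) % N := by
          rw [toAdd_mul, ZMod.val_add]
        rw [h1, hrel, pow_add, map_mul] } with hgdef
  have hcomm : ∀ (x : ZMod p) (y : Multiplicative (ZMod N)), Commute (f x) (g y) := by
    intro x y
    show f x * g y = g y * f x
    rw [hfdef, hgdef]
    show (RingCon.mk' s) (fz x) * (RingCon.mk' s) _ = (RingCon.mk' s) _ * (RingCon.mk' s) (fz x)
    rw [← map_mul, ← map_mul]
    congr 1
    apply Subtype.ext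
    show (fz x : BigM p) * _ = _ * (fz x : BigM p)
    have : (fz x : BigM p) = algebraMap (ZMod p) (BigM p) x := rfl
    rw [this]
    exact (Algebra.commutes x _)
  set ψ : MonoidAlgebra (ZMod p) (Multiplicative (ZMod N)) →+* s.Quotient :=
    MonoidAlgebra.liftNCRingHom f g hcomm with hψdef
  refine ⟨ψ, ?_⟩
  have hsingle : ∀ x₀ : Multiplicative (ZMod N),
      ψ (MonoidAlgebra.single x₀ (1 : ZMod p)) = g x₀ := by
    intro x₀
    have h0 : ψ (MonoidAlgebra.single x₀ (1 : ZMod p))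
        = MonoidAlgebra.liftNC f.toAddMonoidHom (⇑g) (MonoidAlgebra.single x₀ (1 : ZMod p)) := rfl
    rw [h0, MonoidAlgebra.liftNC_single]
    show f 1 * g x₀ = g x₀
    rw [map_one, one_mul]
  -- surjectivity
  have hmk : ∀ q : BigM p, ∀ hq : q ∈ Subring.closure {aElt p},
      (RingCon.mk' s) ⟨q, hsubR hq⟩ ∈ Set.range ψ := by
    intro q hq
    induction hq using Subring.closure_induction with
    | mem t ht =>
      rcases ht with rfl
      refine ⟨MonoidAlgebra.single (Multiplicative.ofAdd ((1:ℕ) : ZMod N)) 1, ?_⟩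
      rw [hsingle]
      show (RingCon.mk' s) (aR ^ (Multiplicative.toAdd (Multiplicative.ofAdd ((1:ℕ) : ZMod N))).val) = _
      rw [toAdd_ofAdd, ZMod.val_natCast, hrel 1, pow_one]
    | zero => exact ⟨0, by rw [map_zero]; rfl⟩
    | one => exact ⟨1, by rw [map_one]; rfl⟩
    | add u v hu hv ihu ihv =>
      obtain ⟨a1, ha1⟩ := ihu
      obtain ⟨a2, ha2⟩ := ihv
      exact ⟨a1 + a2, by rw [map_add, ha1, ha2, ← map_add]; rfl⟩
    | neg u hu ihu =>
      obtain ⟨a1, ha1⟩ := ihu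
      exact ⟨-a1, by rw [map_neg, ha1, ← map_neg]; rfl⟩
    | mul u v hu hv ihu ihv =>
      obtain ⟨a1, ha1⟩ := ihu
      obtain ⟨a2, ha2⟩ := ihv
      exact ⟨a1 * a2, by rw [map_mul, ha1, ha2, ← map_mul]; rfl⟩
  intro w
  obtain ⟨z, rfl⟩ : ∃ z : Rring p, (RingCon.mk' s) z = w := Quot.exists_rep w
  obtain ⟨q, hq, x, hx, y, hy, heq⟩ := part3 (z : BigM p) z.2
  have : (RingCon.mk' s) z = (RingCon.mk' s) ⟨q, hsubR hq⟩ := by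
    apply (RingCon.eq s).mpr
    apply (hs z ⟨q, hsubR hq⟩).mpr
    exact ⟨x, hx, y, hy, by rw [heq]; abel⟩
  rw [this]
  exact hmk q hq
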